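/- Let G be a finite 2-group generated by a₁, a₂, a₃ with relations modulo G₃: a₁² ≡ c₁₂, a₂² ≡ c₁₂c₁₃, a₃² ≡ c₁₃, c₂₃ ≡ 1 (mod G₃), and G/G₃ of order 32. Then all weight-3 basic commutators c_{ijk} lie in G₄, hence G₃ = G₄ and (by nilpotency) G₃ = 1, so G has order 32. -/

import Mathlib

open scoped commutatorElement
open Subgroup

section Helpers
variable {Q : Type*} [Group Q]

private lemma czl {z : Q} (hz : z ∈ center Q) (g : Q) : ⁅z, g⁆ = 1 :=
  commutatorElement_eq_one_iff_commute.mpr ((mem_center_iff.mp hz g).symm)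

private lemma czr {z : Q} (hz : z ∈ center Q) (g : Q) : ⁅g, z⁆ = 1 :=
  commutatorElement_eq_one_iff_commute.mpr (mem_center_iff.mp hz g)

private lemma conj_c {z : Q} (hz : z ∈ center Q) (g : Q) : g * z * g⁻¹ = z := by
  rw [mem_center_iff.mp hz g]; group

private lemma conj_c' {z : Q} (hz : z ∈ center Q) (g : Q) : g⁻¹ * z * g = z := by
  rw [mem_center_iff.mp hz g⁻¹]; group

private lemma rev_comm {u v t : Q} (h : ⁅⁅u,v⁆,t⁆ = 1) : ⁅⁅v,u⁆,t⁆ = 1 := by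
  have e : ⁅⁅v,u⁆,t⁆ = ⁅u,v⁆⁻¹ * ⁅⁅u,v⁆,t⁆⁻¹ * ⁅u,v⁆ := by group
  rw [e, h]; group

private lemma key {Q : Type*} [Group Q] (b₁ b₂ b₃ z₁ z₂ z₃ w : Q)
    (hC : ∀ x y z : Q, ⁅⁅x, y⁆, z⁆ ∈ center Q)
    (hz₁ : z₁ ∈ center Q) (hz₂ : z₂ ∈ center Q)
    (hz₃ : z₃ ∈ center Q) (hw : w ∈ center Q)
    (he₁ : b₁ ^ 2 = ⁅b₁, b₂⁆ * z₁)
    (he₂ : b₂ ^ 2 = ⁅b₁, b₂⁆ * ⁅b₁, b₃⁆ * z₂)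
    (he₃ : b₃ ^ 2 = ⁅b₁, b₃⁆ * z₃)
    (he₄ : ⁅b₂, b₃⁆ = w) :
    ⁅⁅b₁, b₂⁆, b₁⁆ = 1 ∧ ⁅⁅b₁, b₂⁆, b₂⁆ = 1 ∧ ⁅⁅b₁, b₂⁆, b₃⁆ = 1 ∧
    ⁅⁅b₁, b₃⁆, b₁⁆ = 1 ∧ ⁅⁅b₁, b₃⁆, b₂⁆ = 1 ∧ ⁅⁅b₁, b₃⁆, b₃⁆ = 1 := by
  -- Step 1 : ⁅d₁₂, b₁⁆ = 1
  have hd12 : ⁅b₁, b₂⁆ = b₁ ^ 2 * z₁⁻¹ := by rw [he₁]; group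
  have S1 : ⁅⁅b₁, b₂⁆, b₁⁆ = 1 := by
    rw [hd12]
    have e : ⁅b₁ ^ 2 * z₁⁻¹, b₁⁆ = b₁ ^ 2 * ⁅z₁⁻¹, b₁⁆ * (b₁ ^ 2)⁻¹ * ⁅b₁ ^ 2, b₁⁆ := by
      rw [sq]; group
    rw [e, czl (inv_mem hz₁), sq]; group
  -- Step 2 : ⁅d₁₃, b₃⁆ = 1
  have hd13 : ⁅b₁, b₃⁆ = b₃ ^ 2 * z₃⁻¹ := by rw [he₃]; group
  have S2 : ⁅⁅b₁, b₃⁆, b₃⁆ = 1 := by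
    rw [hd13]
    have e : ⁅b₃ ^ 2 * z₃⁻¹, b₃⁆ = b₃ ^ 2 * ⁅z₃⁻¹, b₃⁆ * (b₃ ^ 2)⁻¹ * ⁅b₃ ^ 2, b₃⁆ := by
      rw [sq]; group
    rw [e, czl (inv_mem hz₃), sq]; group
  -- Step 3 : R2 : ⁅d₁₃, b₁⁆ = d₁₃⁻¹ * d₁₃⁻¹
  have wa3 : ⁅b₃ ^ 2, b₁⁆ = ⁅b₃, ⁅b₃, b₁⁆⁆ * (⁅b₁, b₃⁆⁻¹ * ⁅b₁, b₃⁆⁻¹) := by rw [sq]; group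
  have h3a : ⁅b₃, ⁅b₃, b₁⁆⁆ = 1 := by
    have e : ⁅b₃, ⁅b₃, b₁⁆⁆ = ⁅b₁, b₃⁆⁻¹ * ⁅⁅b₁, b₃⁆, b₃⁆ * ⁅b₁, b₃⁆ := by group
    rw [e, S2]; group
  have wb3 : ⁅b₃ ^ 2, b₁⁆ = ⁅⁅b₁, b₃⁆, b₁⁆ := by
    rw [he₃]
    have e : ⁅⁅b₁, b₃⁆ * z₃, b₁⁆
        = ⁅b₁, b₃⁆ * ⁅z₃, b₁⁆ * ⁅b₁, b₃⁆⁻¹ * ⁅⁅b₁, b₃⁆, b₁⁆ := by group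
    rw [e, czl hz₃]; group
  have R2 : ⁅⁅b₁, b₃⁆, b₁⁆ = ⁅b₁, b₃⁆⁻¹ * ⁅b₁, b₃⁆⁻¹ := by
    rw [← wb3, wa3, h3a, one_mul]
  -- Step 4 : R1 : ⁅d₁₂, b₃⁆ = c⁴
  have h4a : ⁅b₁, ⁅b₁, b₃⁆⁆ = ⁅b₁, b₃⁆ * ⁅b₁, b₃⁆ := by
    have e : ⁅b₁, ⁅b₁, b₃⁆⁆ = ⁅⁅b₁, b₃⁆, b₁⁆⁻¹ := (commutatorElement_inv _ _).symm
    rw [e, R2]; group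
  have wa4 : ⁅b₁ ^ 2, b₃⁆ = ⁅b₁, ⁅b₁, b₃⁆⁆ * ⁅b₁, b₃⁆ * ⁅b₁, b₃⁆ := by rw [sq]; group
  have wb4 : ⁅b₁ ^ 2, b₃⁆ = ⁅⁅b₁, b₂⁆, b₃⁆ := by
    rw [he₁]
    have e : ⁅⁅b₁, b₂⁆ * z₁, b₃⁆
        = ⁅b₁, b₂⁆ * ⁅z₁, b₃⁆ * ⁅b₁, b₂⁆⁻¹ * ⁅⁅b₁, b₂⁆, b₃⁆ := by group
    rw [e, czl hz₁]; group
  have R1 : ⁅⁅b₁, b₂⁆, b₃⁆ = ⁅b₁, b₃⁆ * ⁅b₁, b₃⁆ * (⁅b₁, b₃⁆ * ⁅b₁, b₃⁆) := by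
    rw [← wb4, wa4, h4a]; group
  -- Step 5 : R3 : w * w = ⁅d₁₂, b₃⁆
  have wa5 : ⁅b₂ ^ 2, b₃⁆ = ⁅b₂, ⁅b₂, b₃⁆⁆ * ⁅b₂, b₃⁆ * ⁅b₂, b₃⁆ := by rw [sq]; group
  have h5a : ⁅b₂, ⁅b₂, b₃⁆⁆ = 1 := by rw [he₄]; exact czr hw b₂
  have wb5 : ⁅b₂ ^ 2, b₃⁆ = ⁅⁅b₁, b₂⁆, b₃⁆ := by
    rw [he₂]
    have e : ⁅⁅b₁, b₂⁆ * ⁅b₁, b₃⁆ * z₂, b₃⁆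
        = ⁅b₁, b₂⁆ * ⁅b₁, b₃⁆ * ⁅z₂, b₃⁆ * (⁅b₁, b₂⁆ * ⁅b₁, b₃⁆)⁻¹ *
          (⁅b₁, b₂⁆ * ⁅⁅b₁, b₃⁆, b₃⁆ * ⁅b₁, b₂⁆⁻¹ * ⁅⁅b₁, b₂⁆, b₃⁆) := by group
    rw [e, czl hz₂, S2]; group
  have R3 : w * w = ⁅⁅b₁, b₂⁆, b₃⁆ := by
    rw [← wb5, wa5, h5a, he₄]; group
  -- Step 6 : R4 : ⁅d₁₃, b₂⁆ = w⁻¹ * w⁻¹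
  have wa6 : ⁅b₃ ^ 2, b₂⁆ = ⁅b₃, ⁅b₃, b₂⁆⁆ * (⁅b₂, b₃⁆⁻¹ * ⁅b₂, b₃⁆⁻¹) := by rw [sq]; group
  have h6a : ⁅b₃, ⁅b₃, b₂⁆⁆ = 1 := by
    have e : ⁅b₃, ⁅b₃, b₂⁆⁆ = ⁅b₃, ⁅b₂, b₃⁆⁻¹⁆ := by group
    rw [e, he₄]
    exact czr (inv_mem hw) b₃
  have wb6 : ⁅b₃ ^ 2, b₂⁆ = ⁅⁅b₁, b₃⁆, b₂⁆ := by
    rw [he₃]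
    have e : ⁅⁅b₁, b₃⁆ * z₃, b₂⁆
        = ⁅b₁, b₃⁆ * ⁅z₃, b₂⁆ * ⁅b₁, b₃⁆⁻¹ * ⁅⁅b₁, b₃⁆, b₂⁆ := by group
    rw [e, czl hz₃]; group
  have R4 : ⁅⁅b₁, b₃⁆, b₂⁆ = w⁻¹ * w⁻¹ := by
    rw [← wb6, wa6, h6a, he₄, one_mul]
  -- Step 7 : R5 : ⁅d₁₂, b₂⁆ = w * w
  have R5 : ⁅⁅b₁, b₂⁆, b₂⁆ = w * w := by
    have hde : ⁅b₁, b₂⁆ * ⁅b₁, b₃⁆ = b₂ ^ 2 * z₂⁻¹ := by rw [he₂]; group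
    have I : ⁅b₂ ^ 2 * z₂⁻¹, b₂⁆ = 1 := by
      have e : ⁅b₂ ^ 2 * z₂⁻¹, b₂⁆
          = b₂ ^ 2 * ⁅z₂⁻¹, b₂⁆ * (b₂ ^ 2)⁻¹ * ⁅b₂ ^ 2, b₂⁆ := by rw [sq]; group
      rw [e, czl (inv_mem hz₂), sq]; group
    rw [← hde] at I
    have e2 : ⁅⁅b₁, b₂⁆ * ⁅b₁, b₃⁆, b₂⁆
        = ⁅b₁, b₂⁆ * ⁅⁅b₁, b₃⁆, b₂⁆ * ⁅b₁, b₂⁆⁻¹ * ⁅⁅b₁, b₂⁆, b₂⁆ := by group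
    rw [e2, conj_c (hC b₁ b₃ b₂), R4] at I
    calc ⁅⁅b₁, b₂⁆, b₂⁆ = (w⁻¹ * w⁻¹)⁻¹ * (w⁻¹ * w⁻¹ * ⁅⁅b₁, b₂⁆, b₂⁆) := by group
    _ = (w⁻¹ * w⁻¹)⁻¹ * 1 := by rw [I]
    _ = w * w := by rw [mul_one, mul_inv_rev, inv_inv]
  -- Step 8 : R6 : d₁₂ * d₁₂ = ⁅d₁₂, b₂⁆
  have h8a : ⁅b₁, ⁅b₁, b₂⁆⁆ = 1 := by
    have e : ⁅b₁, ⁅b₁, b₂⁆⁆ = ⁅⁅b₁, b₂⁆, b₁⁆⁻¹ := (commutatorElement_inv _ _).symm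
    rw [e, S1, inv_one]
  have wa8 : ⁅b₁ ^ 2, b₂⁆ = ⁅b₁, ⁅b₁, b₂⁆⁆ * ⁅b₁, b₂⁆ * ⁅b₁, b₂⁆ := by rw [sq]; group
  have wb8 : ⁅b₁ ^ 2, b₂⁆ = ⁅⁅b₁, b₂⁆, b₂⁆ := by
    rw [he₁]
    have e : ⁅⁅b₁, b₂⁆ * z₁, b₂⁆
        = ⁅b₁, b₂⁆ * ⁅z₁, b₂⁆ * ⁅b₁, b₂⁆⁻¹ * ⁅⁅b₁, b₂⁆, b₂⁆ := by group
    rw [e, czl hz₁]; group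
  have R6 : ⁅b₁, b₂⁆ * ⁅b₁, b₂⁆ = ⁅⁅b₁, b₂⁆, b₂⁆ := by
    rw [← wb8, wa8, h8a, one_mul]
  -- Step 9 : F1 : ⁅d₁₃, b₁⁆ = 1
  have h9a : ⁅b₂, ⁅b₂, b₁⁆⁆ = ⁅⁅b₁, b₂⁆, b₂⁆ := by
    have e : ⁅b₂, ⁅b₂, b₁⁆⁆ = ⁅b₁, b₂⁆⁻¹ * ⁅⁅b₁, b₂⁆, b₂⁆ * ⁅b₁, b₂⁆ := by group
    rw [e, conj_c' (hC b₁ b₂ b₂)]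
  have wa9 : ⁅b₂ ^ 2, b₁⁆ = 1 := by
    have e : ⁅b₂ ^ 2, b₁⁆ = ⁅b₂, ⁅b₂, b₁⁆⁆ * ⁅b₂, b₁⁆ * ⁅b₂, b₁⁆ := by rw [sq]; group
    rw [e, h9a, ← R6]; group
  have wb9 : ⁅b₂ ^ 2, b₁⁆ = ⁅⁅b₁, b₃⁆, b₁⁆ := by
    rw [he₂]
    have e : ⁅⁅b₁, b₂⁆ * ⁅b₁, b₃⁆ * z₂, b₁⁆
        = ⁅b₁, b₂⁆ * ⁅b₁, b₃⁆ * ⁅z₂, b₁⁆ * (⁅b₁, b₂⁆ * ⁅b₁, b₃⁆)⁻¹ *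
          (⁅b₁, b₂⁆ * ⁅⁅b₁, b₃⁆, b₁⁆ * ⁅b₁, b₂⁆⁻¹ * ⁅⁅b₁, b₂⁆, b₁⁆) := by group
    rw [e, czl hz₂, conj_c (hC b₁ b₃ b₁), S1]; group
  have F1 : ⁅⁅b₁, b₃⁆, b₁⁆ = 1 := by rw [← wb9, wa9]
  -- Step 10 : conclusions
  have hc2 : ⁅b₁, b₃⁆ * ⁅b₁, b₃⁆ = 1 := by
    have h := R2.symm.trans F1
    have e : ⁅b₁, b₃⁆ * ⁅b₁, b₃⁆ = (⁅b₁, b₃⁆⁻¹ * ⁅b₁, b₃⁆⁻¹)⁻¹ := by group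
    rw [e, h, inv_one]
  have E3 : ⁅⁅b₁, b₂⁆, b₃⁆ = 1 := by rw [R1, hc2]; group
  have hw2 : w * w = 1 := R3.trans E3
  have F2 : ⁅⁅b₁, b₃⁆, b₂⁆ = 1 := by
    rw [R4, show (w⁻¹ * w⁻¹ : Q) = (w * w)⁻¹ from by group, hw2, inv_one]
  have E2 : ⁅⁅b₁, b₂⁆, b₂⁆ = 1 := R5.trans hw2
  exact ⟨S1, E2, E3, F1, F2, S2⟩
end Helpers
set_option maxHeartbeats 1000000 in
/-- Let `G` be a finite 2-group generated by `a₁, a₂, a₃` with relations modulo `G₃`: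
`a₁² ≡ c₁₂`, `a₂² ≡ c₁₂c₁₃`, `a₃² ≡ c₁₃`, `c₂₃ ≡ 1`, and `G/G₃` of order 32
(Hall–Senior group 32.040). Then all weight-3 basic commutators `c_{ijk}` lie in `G₄`,
hence `G₃ = G₄`, so by nilpotency `G₃ = 1` and `G` has order 32. -/
theorem group_32_040_rigid {G : Type*} [Group G] [Finite G] (hp : IsPGroup 2 G)
    (a₁ a₂ a₃ : G) (hgen : Subgroup.closure {a₁, a₂, a₃} = (⊤ : Subgroup G))
    (h1 : a₁ ^ 2 * (⁅a₁, a₂⁆)⁻¹ ∈ Subgroup.lowerCentralSeries (⊤ : Subgroup G) 2)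
    (h2 : a₂ ^ 2 * (⁅a₁, a₂⁆ * ⁅a₁, a₃⁆)⁻¹ ∈ Subgroup.lowerCentralSeries (⊤ : Subgroup G) 2)
    (h3 : a₃ ^ 2 * (⁅a₁, a₃⁆)⁻¹ ∈ Subgroup.lowerCentralSeries (⊤ : Subgroup G) 2)
    (h23 : ⁅a₂, a₃⁆ ∈ Subgroup.lowerCentralSeries (⊤ : Subgroup G) 2)
    (hcard : Nat.card (G ⧸ Subgroup.lowerCentralSeries (⊤ : Subgroup G) 2) = 32) :
    (∀ x y z : G, x ∈ ({a₁, a₂, a₃} : Set G) → y ∈ ({a₁, a₂, a₃} : Set G) →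
      z ∈ ({a₁, a₂, a₃} : Set G) → ⁅⁅x, y⁆, z⁆ ∈ Subgroup.lowerCentralSeries (⊤ : Subgroup G) 3) ∧
    Subgroup.lowerCentralSeries (⊤ : Subgroup G) 2 = Subgroup.lowerCentralSeries (⊤ : Subgroup G) 3 ∧
    Subgroup.lowerCentralSeries (⊤ : Subgroup G) 2 = ⊥ ∧ Nat.card G = 32 := by
  classical
  set K := Subgroup.lowerCentralSeries (⊤ : Subgroup G) 3 with hKdef
  let π : G →* G ⧸ K := QuotientGroup.mk' K
  have hπsurj : Function.Surjective π := QuotientGroup.mk'_surjective K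
  -- image of the lower central series
  have hmap : ∀ n, (Subgroup.lowerCentralSeries (⊤ : Subgroup G) n).map π = Subgroup.lowerCentralSeries (⊤ : Subgroup (G ⧸ K)) n := by
    intro n
    induction n with
    | zero =>
      show Subgroup.map π ⊤ = ⊤
      exact Subgroup.map_top_of_surjective π hπsurj
    | succ n ih =>
      show Subgroup.map π ⁅Subgroup.lowerCentralSeries (⊤ : Subgroup G) n, ⊤⁆ = ⁅Subgroup.lowerCentralSeries (⊤ : Subgroup (G ⧸ K)) n, ⊤⁆
      rw [Subgroup.map_commutator, ih, Subgroup.map_top_of_surjective π hπsurj]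
  have hker : π.ker = K := QuotientGroup.ker_mk' K
  have h3bot : Subgroup.lowerCentralSeries (⊤ : Subgroup (G ⧸ K)) 3 = ⊥ := by
    rw [← hmap 3, Subgroup.map_eq_bot_iff, hker]
  have hcent : ∀ x ∈ Subgroup.lowerCentralSeries (⊤ : Subgroup (G ⧸ K)) 2, x ∈ Subgroup.center (G ⧸ K) := by
    intro x hx
    rw [Subgroup.mem_center_iff]
    intro g
    have hmem : ⁅x, g⁆ ∈ Subgroup.lowerCentralSeries (⊤ : Subgroup (G ⧸ K)) 3 := by
      show ⁅x, g⁆ ∈ ⁅Subgroup.lowerCentralSeries (⊤ : Subgroup (G ⧸ K)) 2, ⊤⁆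
      exact Subgroup.commutator_mem_commutator hx (Subgroup.mem_top g)
    rw [h3bot, Subgroup.mem_bot, commutatorElement_eq_one_iff_commute] at hmem
    exact hmem.eq.symm
  have hC : ∀ x y z : G ⧸ K, ⁅⁅x, y⁆, z⁆ ∈ Subgroup.center (G ⧸ K) := by
    intro x y z
    apply hcent
    show ⁅⁅x, y⁆, z⁆ ∈ ⁅Subgroup.lowerCentralSeries (⊤ : Subgroup (G ⧸ K)) 1, ⊤⁆
    exact Subgroup.commutator_mem_commutator
      (Subgroup.commutator_mem_commutator (Subgroup.mem_top x) (Subgroup.mem_top y))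
      (Subgroup.mem_top z)
  have hz : ∀ n : G, n ∈ Subgroup.lowerCentralSeries (⊤ : Subgroup G) 2 → π n ∈ Subgroup.center (G ⧸ K) := by
    intro n hn
    apply hcent
    rw [← hmap 2]
    exact Subgroup.mem_map_of_mem π hn
  -- the relations in the quotient
  have he1Q : (π a₁) ^ 2 = ⁅π a₁, π a₂⁆ * π (a₁ ^ 2 * (⁅a₁, a₂⁆)⁻¹) := by
    rw [Subgroup.mem_center_iff.mp (hz _ h1) ⁅π a₁, π a₂⁆, ← map_commutatorElement,
      ← map_mul, ← map_pow]
    congr 1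
    group
  have he2Q : (π a₂) ^ 2 = ⁅π a₁, π a₂⁆ * ⁅π a₁, π a₃⁆ * π (a₂ ^ 2 * (⁅a₁, a₂⁆ * ⁅a₁, a₃⁆)⁻¹) := by
    rw [Subgroup.mem_center_iff.mp (hz _ h2) (⁅π a₁, π a₂⁆ * ⁅π a₁, π a₃⁆),
      ← map_commutatorElement, ← map_commutatorElement, ← map_mul, ← map_mul, ← map_pow]
    congr 1
    group
  have he3Q : (π a₃) ^ 2 = ⁅π a₁, π a₃⁆ * π (a₃ ^ 2 * (⁅a₁, a₃⁆)⁻¹) := by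
    rw [Subgroup.mem_center_iff.mp (hz _ h3) ⁅π a₁, π a₃⁆, ← map_commutatorElement,
      ← map_mul, ← map_pow]
    congr 1
    group
  have he4Q : ⁅π a₂, π a₃⁆ = π ⁅a₂, a₃⁆ := (map_commutatorElement π a₂ a₃).symm
  obtain ⟨P1, P2, P3, P4, P5, P6⟩ :=
    key (π a₁) (π a₂) (π a₃) _ _ _ _ hC (hz _ h1) (hz _ h2) (hz _ h3) (hz _ h23)
      he1Q he2Q he3Q he4Q
  -- nine pairs, all weight-3 commutators of generators vanish in the quotient
  have c23Q : ∀ t : G ⧸ K, ⁅⁅π a₂, π a₃⁆, t⁆ = 1 := by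
    intro t
    rw [he4Q]
    exact czl (hz _ h23) t
  have diag : ∀ u v : G ⧸ K, ⁅⁅u, u⁆, v⁆ = 1 := by intro u v; group
  have factQ : ∀ u ∈ ({π a₁, π a₂, π a₃} : Set (G ⧸ K)), ∀ v ∈ ({π a₁, π a₂, π a₃} : Set (G ⧸ K)),
      ∀ t ∈ ({π a₁, π a₂, π a₃} : Set (G ⧸ K)), ⁅⁅u, v⁆, t⁆ = 1 := by
    intro u hu v hv t ht
    simp only [Set.mem_insert_iff, Set.mem_singleton_iff] at hu hv ht
    rcases hu with rfl | rfl | rfl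
    · rcases hv with rfl | rfl | rfl
      · exact diag _ _
      · rcases ht with rfl | rfl | rfl
        · exact P1
        · exact P2
        · exact P3
      · rcases ht with rfl | rfl | rfl
        · exact P4
        · exact P5
        · exact P6
    · rcases hv with rfl | rfl | rfl
      · rcases ht with rfl | rfl | rfl
        · exact rev_comm P1
        · exact rev_comm P2
        · exact rev_comm P3
      · exact diag _ _
      · exact c23Q _
    · rcases hv with rfl | rfl | rfl
      · rcases ht with rfl | rfl | rfl
        · exact rev_comm P4
        · exact rev_comm P5
        · exact rev_comm P6
      · exact rev_comm (c23Q _)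
      · exact diag _ _
  have memQ : ∀ x ∈ ({a₁, a₂, a₃} : Set G), π x ∈ ({π a₁, π a₂, π a₃} : Set (G ⧸ K)) := by
    intro x hx
    simp only [Set.mem_insert_iff, Set.mem_singleton_iff] at hx ⊢
    rcases hx with rfl | rfl | rfl
    · exact Or.inl rfl
    · exact Or.inr (Or.inl rfl)
    · exact Or.inr (Or.inr rfl)
  have fact9 : ∀ x ∈ ({a₁, a₂, a₃} : Set G), ∀ y ∈ ({a₁, a₂, a₃} : Set G),
      ∀ z ∈ ({a₁, a₂, a₃} : Set G), ⁅⁅π x, π y⁆, π z⁆ = 1 := by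
    intro x hx y hy z hz'
    exact factQ _ (memQ x hx) _ (memQ y hy) _ (memQ z hz')
  -- Part 1
  have part1 : ∀ x y z : G, x ∈ ({a₁, a₂, a₃} : Set G) → y ∈ ({a₁, a₂, a₃} : Set G) →
      z ∈ ({a₁, a₂, a₃} : Set G) → ⁅⁅x, y⁆, z⁆ ∈ Subgroup.lowerCentralSeries (⊤ : Subgroup G) 3 := by
    intro x y z hx hy hz'
    have : π ⁅⁅x, y⁆, z⁆ = 1 := by
      rw [map_commutatorElement, map_commutatorElement]
      exact fact9 x hx y hy z hz'
    rw [← hKdef, ← hker]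
    exact this
  -- the quotient has class at most 2
  have hgenQ : Subgroup.closure ({π a₁, π a₂, π a₃} : Set (G ⧸ K)) = ⊤ := by
    have := congrArg (Subgroup.map π) hgen
    rwa [MonoidHom.map_closure, Subgroup.map_top_of_surjective π hπsurj,
      Set.image_insert_eq, Set.image_insert_eq, Set.image_singleton] at this
  have stepA : ∀ x ∈ ({π a₁, π a₂, π a₃} : Set (G ⧸ K)), ∀ y ∈ ({π a₁, π a₂, π a₃} : Set (G ⧸ K)),
      ⁅x, y⁆ ∈ Subgroup.center (G ⧸ K) := by
    intro x hx y hy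
    rw [Subgroup.mem_center_iff]
    intro g
    have hg : g ∈ Subgroup.closure ({π a₁, π a₂, π a₃} : Set (G ⧸ K)) := by
      rw [hgenQ]; exact Subgroup.mem_top g
    refine Subgroup.closure_induction (p := fun g _ => g * ⁅x, y⁆ = ⁅x, y⁆ * g) ?_ ?_ ?_ ?_ hg
    · intro t ht
      show t * ⁅x, y⁆ = ⁅x, y⁆ * t
      have h1' : ⁅⁅x, y⁆, t⁆ = 1 := factQ x hx y hy t ht
      exact (commutatorElement_eq_one_iff_commute.mp h1').eq.symm
    · show (1 : G ⧸ K) * ⁅x, y⁆ = ⁅x, y⁆ * 1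
      rw [one_mul, mul_one]
    · intro u v _ _ hu hv
      have hu' : u * ⁅x, y⁆ = ⁅x, y⁆ * u := hu
      have hv' : v * ⁅x, y⁆ = ⁅x, y⁆ * v := hv
      show u * v * ⁅x, y⁆ = ⁅x, y⁆ * (u * v)
      rw [mul_assoc, hv', ← mul_assoc, hu', mul_assoc]
    · intro u _ hu
      have hu' : u * ⁅x, y⁆ = ⁅x, y⁆ * u := hu
      show u⁻¹ * ⁅x, y⁆ = ⁅x, y⁆ * u⁻¹
      exact (Commute.inv_left (show Commute u ⁅x, y⁆ from hu')).eq
  have stepB : ∀ y ∈ ({π a₁, π a₂, π a₃} : Set (G ⧸ K)), ∀ g : G ⧸ K,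
      ⁅g, y⁆ ∈ Subgroup.center (G ⧸ K) := by
    intro y hy g
    have hg : g ∈ Subgroup.closure ({π a₁, π a₂, π a₃} : Set (G ⧸ K)) := by
      rw [hgenQ]; exact Subgroup.mem_top g
    refine Subgroup.closure_induction (p := fun g _ => ⁅g, y⁆ ∈ Subgroup.center (G ⧸ K))
      ?_ ?_ ?_ ?_ hg
    · intro t ht; exact stepA t ht y hy
    · show ⁅(1 : G ⧸ K), y⁆ ∈ Subgroup.center (G ⧸ K)
      rw [commutatorElement_one_left]; exact Subgroup.one_mem _
    · intro u v _ _ hu hv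
      have hu' : ⁅u, y⁆ ∈ Subgroup.center (G ⧸ K) := hu
      have hv' : ⁅v, y⁆ ∈ Subgroup.center (G ⧸ K) := hv
      show ⁅u * v, y⁆ ∈ Subgroup.center (G ⧸ K)
      have e : ⁅u * v, y⁆ = (u * ⁅v, y⁆ * u⁻¹) * ⁅u, y⁆ := by group
      rw [e, conj_c hv' u]
      exact Subgroup.mul_mem _ hv' hu'
    · intro u _ hu
      have hu' : ⁅u, y⁆ ∈ Subgroup.center (G ⧸ K) := hu
      show ⁅u⁻¹, y⁆ ∈ Subgroup.center (G ⧸ K)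
      have e : ⁅u⁻¹, y⁆ = u⁻¹ * ⁅u, y⁆⁻¹ * u := by group
      rw [e, conj_c' (Subgroup.inv_mem _ hu') u]
      exact Subgroup.inv_mem _ hu'
  have stepC : ∀ g h : G ⧸ K, ⁅g, h⁆ ∈ Subgroup.center (G ⧸ K) := by
    intro g h
    have hh : h ∈ Subgroup.closure ({π a₁, π a₂, π a₃} : Set (G ⧸ K)) := by
      rw [hgenQ]; exact Subgroup.mem_top h
    refine Subgroup.closure_induction (p := fun h _ => ⁅g, h⁆ ∈ Subgroup.center (G ⧸ K))
      ?_ ?_ ?_ ?_ hh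
    · intro t ht; exact stepB t ht g
    · show ⁅g, (1 : G ⧸ K)⁆ ∈ Subgroup.center (G ⧸ K)
      rw [commutatorElement_one_right]; exact Subgroup.one_mem _
    · intro u v _ _ hu hv
      have hu' : ⁅g, u⁆ ∈ Subgroup.center (G ⧸ K) := hu
      have hv' : ⁅g, v⁆ ∈ Subgroup.center (G ⧸ K) := hv
      show ⁅g, u * v⁆ ∈ Subgroup.center (G ⧸ K)
      have e : ⁅g, u * v⁆ = ⁅g, u⁆ * (u * ⁅g, v⁆ * u⁻¹) := by group
      rw [e, conj_c hv' u]
      exact Subgroup.mul_mem _ hu' hv'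
    · intro u _ hu
      have hu' : ⁅g, u⁆ ∈ Subgroup.center (G ⧸ K) := hu
      show ⁅g, u⁻¹⁆ ∈ Subgroup.center (G ⧸ K)
      have e : ⁅g, u⁻¹⁆ = u⁻¹ * ⁅g, u⁆⁻¹ * u := by group
      rw [e, conj_c' (Subgroup.inv_mem _ hu') u]
      exact Subgroup.inv_mem _ hu'
  have hQ2bot : Subgroup.lowerCentralSeries (⊤ : Subgroup (G ⧸ K)) 2 = ⊥ := by
    rw [eq_bot_iff]
    show ⁅Subgroup.lowerCentralSeries (⊤ : Subgroup (G ⧸ K)) 1, ⊤⁆ ≤ ⊥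
    rw [Subgroup.commutator_le]
    intro p hp q _
    have hpZ : p ∈ Subgroup.center (G ⧸ K) := by
      have hle : Subgroup.lowerCentralSeries (⊤ : Subgroup (G ⧸ K)) 1 ≤ Subgroup.center (G ⧸ K) := by
        show ⁅(⊤ : Subgroup (G ⧸ K)), ⊤⁆ ≤ _
        rw [Subgroup.commutator_le]
        intro g _ h _
        exact stepC g h
      exact hle hp
    rw [Subgroup.mem_bot]
    exact commutatorElement_eq_one_iff_commute.mpr
      ((Subgroup.mem_center_iff.mp hpZ q).symm)
  -- Part 2
  have part2 : Subgroup.lowerCentralSeries (⊤ : Subgroup G) 2 = Subgroup.lowerCentralSeries (⊤ : Subgroup G) 3 := by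
    apply le_antisymm
    · intro g hg
      have : π g ∈ Subgroup.lowerCentralSeries (⊤ : Subgroup (G ⧸ K)) 2 := by
        rw [← hmap 2]
        exact Subgroup.mem_map_of_mem π hg
      rw [hQ2bot, Subgroup.mem_bot] at this
      have hk : g ∈ π.ker := this
      rw [hker] at hk
      exact hk
    · exact Subgroup.lowerCentralSeries_antitone (S := (⊤ : Subgroup G)) (by omega)
  -- Part 3
  have : Fact (Nat.Prime 2) := ⟨Nat.prime_two⟩
  obtain ⟨n, hn⟩ := Subgroup.nilpotent_iff_lowerCentralSeries.mp hp.isNilpotent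
  have hstab : ∀ m, 2 ≤ m → Subgroup.lowerCentralSeries (⊤ : Subgroup G) m = Subgroup.lowerCentralSeries (⊤ : Subgroup G) 2 := by
    intro m hm
    induction m with
    | zero => omega
    | succ k ih =>
      rcases Nat.lt_or_ge k 2 with hk | hk
      · have : k = 1 := by omega
        subst this
        exact rfl
      · have hk2 := ih hk
        calc Subgroup.lowerCentralSeries (⊤ : Subgroup G) (k + 1) = ⁅Subgroup.lowerCentralSeries (⊤ : Subgroup G) k, ⊤⁆ := rfl
          _ = ⁅Subgroup.lowerCentralSeries (⊤ : Subgroup G) 2, ⊤⁆ := by rw [hk2]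
          _ = Subgroup.lowerCentralSeries (⊤ : Subgroup G) 3 := rfl
          _ = Subgroup.lowerCentralSeries (⊤ : Subgroup G) 2 := part2.symm
  have part3 : Subgroup.lowerCentralSeries (⊤ : Subgroup G) 2 = ⊥ := by
    rcases Nat.lt_or_ge n 2 with hn2 | hn2
    · have : Subgroup.lowerCentralSeries (⊤ : Subgroup G) 2 ≤ Subgroup.lowerCentralSeries (⊤ : Subgroup G) n :=
        Subgroup.lowerCentralSeries_antitone (S := (⊤ : Subgroup G)) (by omega)
      rw [hn] at this
      exact le_bot_iff.mp this
    · rw [← hstab n hn2, hn]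
  -- Part 4
  have part4 : Nat.card G = 32 := by
    rw [part3] at hcard
    rwa [Nat.card_congr (QuotientGroup.quotientBot (G := G)).toEquiv] at hcard
  exact ⟨part1, part2, part3, part4⟩
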